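/- Let s > 1 be real. Then the limit as u → 1⁻ of [(2/u)((1-u)/(1+u))^s ∫₀^{u²} ((1-t)/(1+t))^s (1-t²)^{-5} dt] / [(1-u)^{2s-4}/(2^{s+8}(4-s))] equals 1, provided 1 < s < 3/2. -/

import Mathlib

open Filter Set intervalIntegral Real

lemma integral_one_sub_rpow {x p : ℝ} (hx0 : 0 ≤ x) (hx1 : x < 1) (hp : p + 1 ≠ 0) :
    ∫ t in (0:ℝ)..x, (1-t)^p = (1 - (1-x)^(p+1))/(p+1) := by
  have hderiv : ∀ t ∈ Set.uIcc (0:ℝ) x,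
      HasDerivAt (fun t : ℝ => -(1-t)^(p+1)/(p+1)) ((1-t)^p) t := by
    intro t ht
    rw [uIcc_of_le hx0] at ht
    have h1t : (0:ℝ) < 1 - t := by linarith [ht.2]
    have hd : HasDerivAt (fun t : ℝ => 1 - t) (-1) t := by
      exact (hasDerivAt_id t).const_sub 1
    have := ((hd.rpow_const (p := p+1) (Or.inl h1t.ne')).neg).div_const (p+1)
    refine this.congr_deriv ?_
    rw [add_sub_cancel_right]
    field_simp
  have hint : IntervalIntegrable (fun t : ℝ => (1-t)^p) MeasureTheory.volume 0 x := by
    apply ContinuousOn.intervalIntegrable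
    apply ContinuousOn.rpow_const (by fun_prop)
    intro t ht
    rw [uIcc_of_le hx0] at ht
    left; nlinarith [ht.2]
  rw [integral_eq_sub_of_hasDerivAt hderiv hint]
  have : (1:ℝ) - 0 = 1 := by norm_num
  rw [this, Real.one_rpow]
  ring

lemma integrand_eq {s t : ℝ} (ht0 : 0 ≤ t) (ht1 : t < 1) :
    ((1-t)/(1+t))^s * (1-t^2)^(-(5:ℝ)) = (1-t)^(s-5) * (1+t)^(-(s+5)) := by
  have ha : (0:ℝ) < 1 - t := by linarith
  have hb : (0:ℝ) < 1 + t := by linarith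
  have h2 : 1 - t^2 = (1-t)*(1+t) := by ring
  rw [h2, Real.mul_rpow ha.le hb.le, Real.div_rpow ha.le hb.le,
      div_eq_mul_inv, ← Real.rpow_neg hb.le,
      show s - 5 = s + (-5) by ring, show -(s+5) = -s + (-5) by ring,
      Real.rpow_add ha, Real.rpow_add hb]
  ring

lemma diff_bound {s t : ℝ} (hs1 : 1 < s) (ht : t ∈ Icc (0:ℝ) 1) :
    |(1+t)^(-(s+5)) - (2:ℝ)^(-(s+5))| ≤ (s+5)*(1-t) := by
  have key := Convex.norm_image_sub_le_of_norm_hasDerivWithin_le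
    (f := fun y : ℝ => (1+y)^(-(s+5)))
    (f' := fun y : ℝ => 1 * (-(s+5)) * (1+y)^(-(s+5)-1)) (s := Icc (0:ℝ) 1)
    (C := s+5) ?_ ?_ (convex_Icc 0 1) (right_mem_Icc.2 zero_le_one) ht
  · norm_num at key
    have habs : |t - 1| = 1 - t := by
      rw [abs_of_nonpos (by linarith [ht.2])]; ring
    rw [habs] at key
    convert key using 2
    norm_num
  · intro y hy
    have hb : (0:ℝ) < 1 + y := by linarith [hy.1]
    have hd : HasDerivAt (fun y : ℝ => 1 + y) 1 y := by
      exact (hasDerivAt_id y).const_add 1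
    exact (hd.rpow_const (Or.inl hb.ne')).hasDerivWithinAt
  · intro y hy
    have hb : (1:ℝ) ≤ 1 + y := by linarith [hy.1]
    rw [Real.norm_eq_abs, abs_mul, abs_mul]
    have h1 : |(1:ℝ)| = 1 := abs_one
    have h2 : |-(s+5)| = s+5 := by rw [abs_neg, abs_of_pos (by linarith)]
    have h3 : |(1+y)^(-(s+5)-1)| = (1+y)^(-(s+5)-1) :=
      abs_of_nonneg (Real.rpow_nonneg (by linarith) _)
    rw [h1, h2, h3, one_mul]
    have h4 : (1+y)^(-(s+5)-1) ≤ 1 :=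
      Real.rpow_le_one_of_one_le_of_nonpos hb (by linarith)
    nlinarith

lemma main_J {s : ℝ} (hs1 : 1 < s) (hs2 : s < 3/2) :
    Tendsto (fun x : ℝ => (1-x)^(4-s) *
        ∫ t in (0:ℝ)..x, ((1-t)/(1+t))^s * (1-t^2)^(-(5:ℝ)))
      (nhdsWithin 1 (Ioo (0:ℝ) 1)) (nhds ((2:ℝ)^(-(s+5))/(4-s))) := by
  have h4s : (0:ℝ) < 4 - s := by linarith
  have h3s : (0:ℝ) < 3 - s := by linarith
  set l := nhdsWithin (1:ℝ) (Ioo (0:ℝ) 1) with hl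
  set F : ℝ → ℝ := fun x => (1-x)^(4-s) *
        ∫ t in (0:ℝ)..x, ((1-t)/(1+t))^s * (1-t^2)^(-(5:ℝ)) with hF
  set Fm : ℝ → ℝ := fun x => (2:ℝ)^(-(s+5)) * ((1-x)^(4-s) - 1)/(s-4) with hFm
  set B : ℝ → ℝ := fun x => (s+5) * ((1-x) - (1-x)^(4-s))/(3-s) with hB
  -- (1-x)^(4-s) → 0
  have h1x : Tendsto (fun x : ℝ => 1 - x) l (nhds 0) := by
    have : Tendsto (fun x : ℝ => 1 - x) (nhds 1) (nhds 0) := by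
      have := ((continuous_id : Continuous fun x : ℝ => x).tendsto 1).const_sub 1
      simpa using this
    exact this.mono_left nhdsWithin_le_nhds
  have hz : Tendsto (fun x : ℝ => (1-x)^(4-s)) l (nhds 0) := by
    have c0 : ContinuousAt (fun y : ℝ => y ^ (4-s)) 0 :=
      Real.continuousAt_rpow_const 0 _ (Or.inr h4s.le)
    have := c0.tendsto.comp h1x
    simpa [Function.comp_def, Real.zero_rpow h4s.ne'] using this
  have hs4 : s - 4 ≠ 0 := by intro h; nlinarith
  have hFmten : Tendsto Fm l (nhds ((2:ℝ)^(-(s+5))/(4-s))) := by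
    have h : Tendsto (fun x : ℝ => (2:ℝ)^(-(s+5)) * ((1-x)^(4-s) - 1)/(s-4)) l
        (nhds ((2:ℝ)^(-(s+5)) * ((0:ℝ) - 1)/(s-4))) :=
      ((hz.sub (tendsto_const_nhds (x := (1:ℝ)))).const_mul _).div_const _
    rw [show (2:ℝ)^(-(s+5)) * ((0:ℝ) - 1)/(s-4) = (2:ℝ)^(-(s+5))/(4-s) from by
      field_simp; ring] at h
    exact h
  have hBten : Tendsto B l (nhds 0) := by
    have h : Tendsto (fun x : ℝ => (s+5) * ((1-x) - (1-x)^(4-s))/(3-s)) l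
        (nhds ((s+5) * ((0:ℝ) - 0)/(3-s))) :=
      ((h1x.sub hz).const_mul _).div_const _
    simpa using h
  -- pointwise bound
  have hptwise : ∀ x ∈ Ioo (0:ℝ) 1, |F x - Fm x| ≤ B x := by
    intro x hx
    obtain ⟨hx0, hx1⟩ := hx
    have ha : (0:ℝ) < 1 - x := by linarith
    have hIeq : (∫ t in (0:ℝ)..x, ((1-t)/(1+t))^s * (1-t^2)^(-(5:ℝ)))
        = ∫ t in (0:ℝ)..x, (1-t)^(s-5) * (1+t)^(-(s+5)) := by
      apply integral_congr
      intro t ht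
      rw [uIcc_of_le hx0.le] at ht
      exact integrand_eq ht.1 (lt_of_le_of_lt ht.2 hx1)
    -- integrability
    have hca : ContinuousOn (fun t : ℝ => (1-t)^(s-5)) (uIcc 0 x) := by
      apply ContinuousOn.rpow_const (by fun_prop)
      intro t ht
      rw [uIcc_of_le hx0.le] at ht
      left; nlinarith [ht.2]
    have hcb : ContinuousOn (fun t : ℝ => (1+t)^(-(s+5))) (uIcc 0 x) := by
      apply ContinuousOn.rpow_const (by fun_prop)
      intro t ht
      rw [uIcc_of_le hx0.le] at ht
      left; nlinarith [ht.1]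
    have hintf : IntervalIntegrable (fun t : ℝ => (1-t)^(s-5) * (1+t)^(-(s+5)))
        MeasureTheory.volume 0 x := (hca.mul hcb).intervalIntegrable
    have hintg : IntervalIntegrable (fun t : ℝ => (1-t)^(s-5) * (2:ℝ)^(-(s+5)))
        MeasureTheory.volume 0 x := (hca.mul continuousOn_const).intervalIntegrable
    have hintbd : IntervalIntegrable (fun t : ℝ => (s+5) * (1-t)^(s-4))
        MeasureTheory.volume 0 x := by
      apply ContinuousOn.intervalIntegrable
      apply ContinuousOn.mul continuousOn_const
      apply ContinuousOn.rpow_const (by fun_prop)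
      intro t ht
      rw [uIcc_of_le hx0.le] at ht
      left; nlinarith [ht.2]
    -- FTC values
    have hIg : ∫ t in (0:ℝ)..x, (1-t)^(s-5) = (1 - (1-x)^(s-4))/(s-4) := by
      have := integral_one_sub_rpow (p := s-5) hx0.le hx1 (by intro h; nlinarith)
      rw [show s-5+1 = s-4 by ring] at this
      exact this
    have hIbd : ∫ t in (0:ℝ)..x, (1-t)^(s-4) = (1 - (1-x)^(s-3))/(s-3) := by
      have := integral_one_sub_rpow (p := s-4) hx0.le hx1 (by intro h; nlinarith)
      rw [show s-4+1 = s-3 by ring] at this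
      exact this
    -- split
    have hsplit : (∫ t in (0:ℝ)..x, (1-t)^(s-5) * (1+t)^(-(s+5)))
        = (∫ t in (0:ℝ)..x, (1-t)^(s-5) * (2:ℝ)^(-(s+5)))
          + ∫ t in (0:ℝ)..x, (1-t)^(s-5) * ((1+t)^(-(s+5)) - (2:ℝ)^(-(s+5))) := by
      simp only [mul_sub]
      rw [intervalIntegral.integral_sub hintf hintg]
      ring
    have hIg2 : (∫ t in (0:ℝ)..x, (1-t)^(s-5) * (2:ℝ)^(-(s+5)))
        = (2:ℝ)^(-(s+5)) * ((1 - (1-x)^(s-4))/(s-4)) := by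
      rw [intervalIntegral.integral_mul_const, hIg]
      ring
    -- bound on error integral
    have herr : |∫ t in (0:ℝ)..x, (1-t)^(s-5) * ((1+t)^(-(s+5)) - (2:ℝ)^(-(s+5)))|
        ≤ (s+5) * ((1 - (1-x)^(s-3))/(s-3)) := by
      have h1 := intervalIntegral.abs_integral_le_integral_abs (μ := MeasureTheory.volume)
        (f := fun t : ℝ => (1-t)^(s-5) * ((1+t)^(-(s+5)) - (2:ℝ)^(-(s+5)))) hx0.le
      have hinth : IntervalIntegrable
          (fun t : ℝ => (1-t)^(s-5) * ((1+t)^(-(s+5)) - (2:ℝ)^(-(s+5))))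
          MeasureTheory.volume 0 x :=
        (hca.mul (hcb.sub continuousOn_const)).intervalIntegrable
      have h2 : (∫ t in (0:ℝ)..x, |(1-t)^(s-5) * ((1+t)^(-(s+5)) - (2:ℝ)^(-(s+5)))|)
          ≤ ∫ t in (0:ℝ)..x, (s+5) * (1-t)^(s-4) := by
        apply intervalIntegral.integral_mono_on hx0.le hinth.abs hintbd
        intro t ht
        have hta : (0:ℝ) < 1 - t := by
          rcases ht with ⟨_, ht2⟩; linarith [lt_of_le_of_lt ht2 hx1]
        rw [abs_mul, abs_of_nonneg (Real.rpow_nonneg hta.le _)]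
        have hd := diff_bound hs1 (t := t) ⟨ht.1, by linarith [ht.2]⟩
        have hmul : (1-t)^(s-5) * |(1+t)^(-(s+5)) - (2:ℝ)^(-(s+5))|
            ≤ (1-t)^(s-5) * ((s+5)*(1-t)) :=
          mul_le_mul_of_nonneg_left hd (Real.rpow_nonneg hta.le _)
        have hrw : (1-t)^(s-5) * ((s+5)*(1-t)) = (s+5) * (1-t)^(s-4) := by
          rw [show s-4 = (s-5)+1 by ring, Real.rpow_add_one hta.ne']
          ring
        linarith [hmul, hrw ▸ hmul]
      calc |∫ t in (0:ℝ)..x, (1-t)^(s-5) * ((1+t)^(-(s+5)) - (2:ℝ)^(-(s+5)))|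
          ≤ ∫ t in (0:ℝ)..x, |(1-t)^(s-5) * ((1+t)^(-(s+5)) - (2:ℝ)^(-(s+5)))| := h1
        _ ≤ ∫ t in (0:ℝ)..x, (s+5) * (1-t)^(s-4) := h2
        _ = (s+5) * ((1 - (1-x)^(s-3))/(s-3)) := by
            rw [intervalIntegral.integral_const_mul, hIbd]
    -- assemble
    have hA1 : (1-x)^(4-s) * (1-x)^(s-4) = 1 := by
      rw [← Real.rpow_add ha, show (4-s)+(s-4) = 0 by ring, Real.rpow_zero]
    have hA2 : (1-x)^(4-s) * (1-x)^(s-3) = 1 - x := by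
      rw [← Real.rpow_add ha, show (4-s)+(s-3) = 1 by ring, Real.rpow_one]
    have hApos : (0:ℝ) < (1-x)^(4-s) := Real.rpow_pos_of_pos ha _
    have hFx : F x - Fm x = (1-x)^(4-s) *
        ∫ t in (0:ℝ)..x, (1-t)^(s-5) * ((1+t)^(-(s+5)) - (2:ℝ)^(-(s+5))) := by
      rw [hF, hFm]
      simp only []
      rw [hIeq, hsplit, hIg2]
      have hkey : (1-x)^(4-s) * (1 - (1-x)^(s-4)) = (1-x)^(4-s) - 1 := by
        rw [mul_sub, mul_one, hA1]
      have : (1-x)^(4-s) * ((2:ℝ)^(-(s+5)) * ((1 - (1-x)^(s-4))/(s-4)))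
          = (2:ℝ)^(-(s+5)) * ((1-x)^(4-s) - 1)/(s-4) := by
        rw [← hkey]; ring
      rw [mul_add, this]
      ring
    rw [hFx, abs_mul, abs_of_pos hApos]
    calc (1-x)^(4-s) * |∫ t in (0:ℝ)..x, (1-t)^(s-5) * ((1+t)^(-(s+5)) - (2:ℝ)^(-(s+5)))|
        ≤ (1-x)^(4-s) * ((s+5) * ((1 - (1-x)^(s-3))/(s-3))) :=
          mul_le_mul_of_nonneg_left herr hApos.le
      _ = B x := by
          rw [hB]
          have hkey2 : (1-x)^(4-s) * (1 - (1-x)^(s-3)) = (1-x)^(4-s) - (1-x) := by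
            rw [mul_sub, mul_one, hA2]
          have h33 : s - 3 ≠ 0 := by intro h; nlinarith
          have h33' : (3:ℝ) - s ≠ 0 := h3s.ne'
          have : (1-x)^(4-s) * ((s+5) * ((1 - (1-x)^(s-3))/(s-3)))
              = (s+5) * ((1-x)^(4-s) * (1 - (1-x)^(s-3)))/(s-3) := by ring
          rw [this, hkey2]
          field_simp
          ring
  -- conclude by squeeze
  have hsq : Tendsto (fun x => F x - Fm x) l (nhds 0) := by
    apply squeeze_zero_norm' ?_ hBten
    filter_upwards [self_mem_nhdsWithin] with x hx
    exact hptwise x hx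
  have := hsq.add hFmten
  simpa using this

theorem tendsto_ratio_F_deriv_bound
    (s : ℝ) (hs1 : 1 < s) (hs2 : s < 3 / 2) :
    Filter.Tendsto
      (fun u : ℝ =>
        ((2 / u) * ((1 - u) / (1 + u)) ^ s *
            ∫ t in (0 : ℝ)..(u ^ 2), ((1 - t) / (1 + t)) ^ s * (1 - t ^ 2) ^ (-(5 : ℝ))) /
          ((1 - u) ^ (2 * s - 4) / ((2 : ℝ) ^ (s + 8) * (4 - s))))
      (nhdsWithin 1 (Set.Iio 1)) (nhds 1) := by
  have h4s : (0:ℝ) < 4 - s := by linarith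
  set l := nhdsWithin (1:ℝ) (Set.Iio (1:ℝ)) with hldef
  have hmem : (1:ℝ) ∈ Set.Ioc (0:ℝ) 1 := ⟨zero_lt_one, le_refl 1⟩
  have hsq : Tendsto (fun u : ℝ => u^2) l (nhdsWithin 1 (Ioo (0:ℝ) 1)) := by
    rw [tendsto_nhdsWithin_iff]
    constructor
    · have : Tendsto (fun u : ℝ => u^2) (nhds 1) (nhds 1) := by
        have := (continuous_pow 2).tendsto (1:ℝ)
        simpa using this
      exact this.mono_left nhdsWithin_le_nhds
    · filter_upwards [Ioo_mem_nhdsLT_of_mem hmem] with u hu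
      exact ⟨pow_pos hu.1 2, by nlinarith [hu.1, hu.2]⟩
  have hJ := (main_J hs1 hs2).comp hsq
  have h2u : Tendsto (fun u : ℝ => 2/u) l (nhds 2) := by
    have : Tendsto (fun u : ℝ => 2/u) (nhds 1) (nhds (2/1)) :=
      tendsto_const_nhds.div tendsto_id one_ne_zero
    simpa using this.mono_left nhdsWithin_le_nhds
  have hbu : Tendsto (fun u : ℝ => (1+u)^(-(4:ℝ))) l (nhds ((2:ℝ)^(-(4:ℝ)))) := by
    have hc : ContinuousAt (fun u : ℝ => (1+u)^(-(4:ℝ))) 1 := by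
      apply ContinuousAt.rpow_const (by fun_prop)
      left; norm_num
    have hval : (fun u : ℝ => (1+u)^(-(4:ℝ))) 1 = (2:ℝ)^(-(4:ℝ)) := by norm_num
    exact hval ▸ hc.tendsto.mono_left nhdsWithin_le_nhds
  have hprod : Tendsto (fun u : ℝ => (2/u) * (1+u)^(-(4:ℝ)) * ((2:ℝ)^(s+8)*(4-s)) *
      ((1-u^2)^(4-s) * ∫ t in (0:ℝ)..(u^2), ((1-t)/(1+t))^s * (1-t^2)^(-(5:ℝ)))) l
      (nhds (2 * (2:ℝ)^(-(4:ℝ)) * ((2:ℝ)^(s+8)*(4-s)) * ((2:ℝ)^(-(s+5))/(4-s)))) :=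
    ((h2u.mul hbu).mul tendsto_const_nhds).mul hJ
  have hval : 2 * (2:ℝ)^(-(4:ℝ)) * ((2:ℝ)^(s+8)*(4-s)) * ((2:ℝ)^(-(s+5))/(4-s)) = 1 := by
    rw [show (2:ℝ) * (2:ℝ)^(-(4:ℝ)) * ((2:ℝ)^(s+8)*(4-s)) * ((2:ℝ)^(-(s+5))/(4-s))
        = ((2:ℝ)^(-(4:ℝ)) * (2:ℝ)^(s+8) * (2:ℝ)^(-(s+5))) * (2 * ((4-s)/(4-s))) from by ring]
    rw [← Real.rpow_add two_pos, ← Real.rpow_add two_pos, div_self h4s.ne',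
        show -(4:ℝ) + (s+8) + -(s+5) = -1 by ring]
    rw [show (2:ℝ)^(-1:ℝ) = 1/2 from by
      rw [Real.rpow_neg (by norm_num), Real.rpow_one]; norm_num]
    norm_num
  have heq : ∀ᶠ u in l,
      ((2 / u) * ((1 - u) / (1 + u)) ^ s *
          ∫ t in (0 : ℝ)..(u ^ 2), ((1 - t) / (1 + t)) ^ s * (1 - t ^ 2) ^ (-(5 : ℝ))) /
        ((1 - u) ^ (2 * s - 4) / ((2 : ℝ) ^ (s + 8) * (4 - s)))
      = (2/u) * (1+u)^(-(4:ℝ)) * ((2:ℝ)^(s+8)*(4-s)) *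
          ((1-u^2)^(4-s) * ∫ t in (0:ℝ)..(u^2), ((1-t)/(1+t))^s * (1-t^2)^(-(5:ℝ))) := by
    filter_upwards [Ioo_mem_nhdsLT_of_mem hmem] with u hu
    have ha : (0:ℝ) < 1 - u := by linarith [hu.2]
    have hb : (0:ℝ) < 1 + u := by linarith [hu.1]
    have e1 : (1-u)^(4-s) * (1-u)^(2*s-4) = (1-u)^s := by
      rw [← Real.rpow_add ha, show (4-s)+(2*s-4) = s by ring]
    have e2 : (1+u)^(-(4:ℝ)) * (1+u)^(4-s) = (1+u)^(-s) := by
      rw [← Real.rpow_add hb, show -(4:ℝ)+(4-s) = -s by ring]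
    have hkey : ((1-u)/(1+u))^s
        = (1+u)^(-(4:ℝ)) * (1-u^2)^(4-s) * (1-u)^(2*s-4) := by
      rw [show (1:ℝ)-u^2 = (1-u)*(1+u) by ring, Real.mul_rpow ha.le hb.le,
          show (1+u)^(-(4:ℝ)) * ((1-u)^(4-s) * (1+u)^(4-s)) * (1-u)^(2*s-4)
            = ((1-u)^(4-s) * (1-u)^(2*s-4)) * ((1+u)^(-(4:ℝ)) * (1+u)^(4-s)) from by ring,
          e1, e2, Real.div_rpow ha.le hb.le, Real.rpow_neg hb.le, div_eq_mul_inv]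
    have hane : (1-u)^(2*s-4) ≠ 0 := (Real.rpow_pos_of_pos ha _).ne'
    have hCne : (2:ℝ)^(s+8)*(4-s) ≠ 0 :=
      mul_ne_zero (Real.rpow_pos_of_pos two_pos _).ne' h4s.ne'
    rw [hkey]
    field_simp
  exact Tendsto.congr' (EventuallyEq.symm heq) (hval ▸ hprod)
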